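/- Let F_q be a finite field, E a field extension of F_q of degree m where m = s² is a perfect square, φ an F_q-linear bijection from E to the s × s matrices over F_q, n₁, n₂ positive integers with n₁n₂ = n, and Φ₂ : E^n → (n₁s × n₂s matrices over F_q) the two-dimensional expansion. Let 0 < k < n, set t = ⌊(n−k)/2⌋ and assume t ≥ 1, and let C ⊆ E^n have minimum Hamming distance at least n−k+1. Then Φ₂(C) corrects any single one-dimensional burst of length at most s(t−1)+1: for all c, c′ ∈ C and all n₁s × n₂s matrices e, e′ over F_q whose supports are each contained either in a single row within s(t−1)+1 contiguous columns or in a single column within s(t−1)+1 contiguous rows, Φ₂(c) + e = Φ₂(c′) + e′ implies c = c′. -/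

import Mathlib

/-- The linear (row-major) index of position `j` in the `i`-th block of length `m`. -/
def finIdx {n m : ℕ} (i : Fin n) (j : Fin m) : Fin (n * m) :=
  ⟨i.1 * m + j.1, by
    have h1 : i.1 + 1 ≤ n := i.2
    have h2 : j.1 < m := j.2
    calc i.1 * m + j.1 < (i.1 + 1) * m := by nlinarith
      _ ≤ n * m := Nat.mul_le_mul_right m h1⟩

/-- A one-dimensional burst of length (at most) `L` in a matrix: the support lies in
a single row within `L` contiguous columns, or in a single column within `L`
contiguous rows. -/
def IsLineBurst {F : Type*} [Zero F] {R C : ℕ} (L : ℕ) (e : Matrix (Fin R) (Fin C) F) : Prop :=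
  (∃ r p : ℕ, ∀ i j, e i j ≠ 0 → (i : ℕ) = r ∧ p ≤ (j : ℕ) ∧ (j : ℕ) < p + L) ∨
  (∃ c p : ℕ, ∀ i j, e i j ≠ 0 → (j : ℕ) = c ∧ p ≤ (i : ℕ) ∧ (i : ℕ) < p + L)

section Aux

variable {F : Type*} [Zero F] [DecidableEq F] {n₁ n₂ s t : ℕ}

/-- An interval of length `s*(t-1)+1` inside `Fin (N*s)` meets at most `t` blocks:
if `p ≤ a*s+w < p + (s*(t-1)+1)` with `w < s`, then `p/s ≤ a ≤ p/s + (t-1)`. -/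
lemma block_of_interval (hs : 0 < s) (ht1 : 1 ≤ t) {p a w : ℕ} (hw : w < s)
    (h1 : p ≤ a * s + w) (h2 : a * s + w < p + (s * (t - 1) + 1)) :
    p / s ≤ a ∧ a ≤ p / s + (t - 1) := by
  constructor
  · have hlt : p < (a + 1) * s := by nlinarith
    have := (Nat.div_lt_iff_lt_mul hs).2 hlt
    omega
  · have h3 : a * s ≤ p + s * (t - 1) := by omega
    have h4 := Nat.div_le_div_right (c := s) h3
    rw [Nat.mul_div_cancel a hs, Nat.add_mul_div_left p (t - 1) hs] at h4
    exact h4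

/-- The first coordinate of a block is determined by any element of the block. -/
lemma block_det (hs : 0 < s) {a w r₀ : ℕ} (hw : w < s) (h : a * s + w = r₀) :
    a = r₀ / s := by
  rw [← h, mul_comm a s, Nat.mul_add_div hs, Nat.div_eq_of_lt hw, add_zero]

/-- A line burst of length `s*(t-1)+1` touches at most `t` blocks. -/
lemma burst_blocks (hs : 0 < s) (ht1 : 1 ≤ t)
    (e : Matrix (Fin (n₁ * s)) (Fin (n₂ * s)) F)
    (hb : IsLineBurst (s * (t - 1) + 1) e) :
    ∃ B : Finset (Fin n₁ × Fin n₂), B.card ≤ t ∧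
      ∀ (r : Fin n₁) (c : Fin n₂) (u v : Fin s),
        e (finIdx r u) (finIdx c v) ≠ 0 → (r, c) ∈ B := by
  classical
  refine ⟨Finset.univ.filter (fun rc => ∃ u v : Fin s,
    e (finIdx rc.1 u) (finIdx rc.2 v) ≠ 0), ?_, ?_⟩
  · rcases hb with ⟨r₀, p, h⟩ | ⟨c₀, p, h⟩
    · -- horizontal burst : block column offset determines the block
      have := Finset.card_le_card_of_injOn (fun rc : Fin n₁ × Fin n₂ => rc.2.1 - p / s)
        (s := Finset.univ.filter (fun rc => ∃ u v : Fin s,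
          e (finIdx rc.1 u) (finIdx rc.2 v) ≠ 0)) (t := Finset.range t) ?_ ?_
      · simpa using this
      · intro rc hrc
        simp only [Finset.mem_coe, Finset.mem_filter] at hrc
        obtain ⟨-, u, v, hne⟩ := hrc
        obtain ⟨-, hc1, hc2⟩ := h _ _ hne
        have := block_of_interval hs ht1 v.2 (by simpa [finIdx] using hc1)
          (by simpa [finIdx] using hc2)
        simp only [Finset.mem_coe, Finset.mem_range]
        omega
      · intro rc hrc rc' hrc' hfe
        simp only [Finset.mem_coe, Finset.mem_filter] at hrc hrc'
        obtain ⟨-, u, v, hne⟩ := hrc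
        obtain ⟨-, u', v', hne'⟩ := hrc'
        obtain ⟨hr1, hc1, hc2⟩ := h _ _ hne
        obtain ⟨hr1', hc1', hc2'⟩ := h _ _ hne'
        have hb1 := block_of_interval hs ht1 v.2 (by simpa [finIdx] using hc1)
          (by simpa [finIdx] using hc2)
        have hb1' := block_of_interval hs ht1 v'.2 (by simpa [finIdx] using hc1')
          (by simpa [finIdx] using hc2')
        have hd := block_det hs u.2 (by simpa [finIdx] using hr1)
        have hd' := block_det hs u'.2 (by simpa [finIdx] using hr1')
        have : rc.1 = rc'.1 := Fin.ext (by omega)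
        have : rc.2 = rc'.2 := Fin.ext (by simp only at hfe; omega)
        exact Prod.ext ‹rc.1 = rc'.1› ‹rc.2 = rc'.2›
    · -- vertical burst
      have := Finset.card_le_card_of_injOn (fun rc : Fin n₁ × Fin n₂ => rc.1.1 - p / s)
        (s := Finset.univ.filter (fun rc => ∃ u v : Fin s,
          e (finIdx rc.1 u) (finIdx rc.2 v) ≠ 0)) (t := Finset.range t) ?_ ?_
      · simpa using this
      · intro rc hrc
        simp only [Finset.mem_coe, Finset.mem_filter] at hrc
        obtain ⟨-, u, v, hne⟩ := hrc
        obtain ⟨-, hc1, hc2⟩ := h _ _ hne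
        have := block_of_interval hs ht1 u.2 (by simpa [finIdx] using hc1)
          (by simpa [finIdx] using hc2)
        simp only [Finset.mem_coe, Finset.mem_range]
        omega
      · intro rc hrc rc' hrc' hfe
        simp only [Finset.mem_coe, Finset.mem_filter] at hrc hrc'
        obtain ⟨-, u, v, hne⟩ := hrc
        obtain ⟨-, u', v', hne'⟩ := hrc'
        obtain ⟨hr1, hc1, hc2⟩ := h _ _ hne
        obtain ⟨hr1', hc1', hc2'⟩ := h _ _ hne'
        have hb1 := block_of_interval hs ht1 u.2 (by simpa [finIdx] using hc1)
          (by simpa [finIdx] using hc2)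
        have hb1' := block_of_interval hs ht1 u'.2 (by simpa [finIdx] using hc1')
          (by simpa [finIdx] using hc2')
        have hd := block_det hs v.2 (by simpa [finIdx] using hr1)
        have hd' := block_det hs v'.2 (by simpa [finIdx] using hr1')
        have : rc.1 = rc'.1 := Fin.ext (by simp only at hfe; omega)
        have : rc.2 = rc'.2 := Fin.ext (by omega)
        exact Prod.ext ‹rc.1 = rc'.1› ‹rc.2 = rc'.2›
  · intro r c u v hne
    simp only [Finset.mem_filter, Finset.mem_univ, true_and]
    exact ⟨u, v, hne⟩

end Aux

/-- The two-dimensional expansion (via `φ : E ≃ Mat_{s×s}(F)`, `m = s²`)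
of a code `C ⊆ E^n` of minimum distance at least `n - k + 1` corrects any single
one-dimensional burst of length at most `s(t-1)+1`, where `t = ⌊(n-k)/2⌋ ≥ 1`. -/
theorem matrix_expansion_corrects_single_line_burst
    {F E : Type*} [Field F] [Fintype F] [DecidableEq F]
    [Field E] [Algebra F E] [DecidableEq E]
    (m s n n₁ n₂ k t : ℕ) (hms : m = s ^ 2) (hm : Module.finrank F E = m)
    (hn₁ : 0 < n₁) (hn₂ : 0 < n₂) (hn : n₁ * n₂ = n)
    (φ : E ≃ₗ[F] Matrix (Fin s) (Fin s) F)
    (Φ₂ : (Fin n → E) → Matrix (Fin (n₁ * s)) (Fin (n₂ * s)) F)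
    (hΦ : ∀ (x : Fin n → E) (r : Fin n₁) (c : Fin n₂) (u v : Fin s),
      Φ₂ x (finIdx r u) (finIdx c v) = φ (x (Fin.cast hn (finIdx r c))) u v)
    (hk : 0 < k) (hkn : k < n) (ht : t = (n - k) / 2) (ht1 : 1 ≤ t)
    (C : Set (Fin n → E))
    (hC : ∀ c ∈ C, ∀ c' ∈ C, c ≠ c' → n - k + 1 ≤ hammingDist c c') :
    ∀ c ∈ C, ∀ c' ∈ C, ∀ e e' : Matrix (Fin (n₁ * s)) (Fin (n₂ * s)) F,
      IsLineBurst (s * (t - 1) + 1) e → IsLineBurst (s * (t - 1) + 1) e' →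
      Φ₂ c + e = Φ₂ c' + e' → c = c' := by
  classical
  -- s is positive, since E is nontrivial
  have hs : 0 < s := by
    rcases Nat.eq_zero_or_pos s with hs0 | hs0
    · exfalso
      subst hs0
      have : (0 : E) = 1 := φ.injective (by ext i j; exact i.elim0)
      exact zero_ne_one this
    · exact hs0
  intro c hc c' hc' e e' hbe hbe' heq
  by_contra hne
  obtain ⟨B, hBcard, hB⟩ := burst_blocks hs ht1 e hbe
  obtain ⟨B', hBcard', hB'⟩ := burst_blocks hs ht1 e' hbe'
  -- the set of differing coordinates is contained in the image of B ∪ B'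
  have hsub : (Finset.univ.filter fun i => c i ≠ c' i) ⊆
      (B ∪ B').image (fun rc => Fin.cast hn (finIdx rc.1 rc.2)) := by
    intro i hi
    simp only [Finset.mem_filter, Finset.mem_univ, true_and] at hi
    set r : Fin n₁ := ⟨i.1 / n₂, (Nat.div_lt_iff_lt_mul hn₂).2 (by rw [hn]; exact i.2)⟩
    set col : Fin n₂ := ⟨i.1 % n₂, Nat.mod_lt _ hn₂⟩
    have hidx : Fin.cast hn (finIdx r col) = i := by
      apply Fin.ext
      simp only [Fin.coe_cast, finIdx, r, col]
      rw [mul_comm]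
      exact Nat.div_add_mod i.1 n₂
    have hφne : φ (c i) ≠ φ (c' i) := fun h => hi (φ.injective h)
    have : ∃ u v : Fin s, φ (c i) u v ≠ φ (c' i) u v := by
      by_contra h
      push_neg at h
      exact hφne (by ext u v; exact h u v)
    obtain ⟨u, v, huv⟩ := this
    have h1 : Φ₂ c (finIdx r u) (finIdx col v) ≠ Φ₂ c' (finIdx r u) (finIdx col v) := by
      rw [hΦ, hΦ, hidx]
      exact huv
    have h2 : Φ₂ c (finIdx r u) (finIdx col v) + e (finIdx r u) (finIdx col v) =
        Φ₂ c' (finIdx r u) (finIdx col v) + e' (finIdx r u) (finIdx col v) := by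
      have := congrFun (congrFun heq (finIdx r u)) (finIdx col v)
      simpa [Matrix.add_apply] using this
    have hmem : (r, col) ∈ B ∪ B' := by
      by_cases he0 : e (finIdx r u) (finIdx col v) = 0
      · have he'0 : e' (finIdx r u) (finIdx col v) ≠ 0 := by
          intro h0
          rw [he0, h0, add_zero, add_zero] at h2
          exact h1 h2
        exact Finset.mem_union_right _ (hB' r col u v he'0)
      · exact Finset.mem_union_left _ (hB r col u v he0)
    exact Finset.mem_image.2 ⟨(r, col), hmem, hidx⟩
  have hdist : hammingDist c c' ≤ 2 * t := by
    calc hammingDist c c' ≤ ((B ∪ B').image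
          (fun rc => Fin.cast hn (finIdx rc.1 rc.2))).card := Finset.card_le_card hsub
      _ ≤ (B ∪ B').card := Finset.card_image_le
      _ ≤ B.card + B'.card := Finset.card_union_le _ _
      _ ≤ 2 * t := by omega
  have hge := hC c hc c' hc' hne
  omega
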